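/- (Lemma 2, constructive direction.) For every MMDC L between A and B, there exists a perfect matching M' of the constructed graph G such that Weight(Main(M')) = c(L). -/

import Mathlib

open Finset

section Construction

variable {s t : ℕ}

/-- The left part `S` of the constructed complete bipartite graph `G`:
`A_i` (`α i` copies of `a_i`), `A'_i` (`α' i − α i` copies of `a_i`),
the dummy sets `X_j` (`β' j − β j` vertices) and `W_j` (`s − β' j` vertices). -/
abbrev LeftV (s t : ℕ) (α α' : Fin s → ℕ) (β β' : Fin t → ℕ) : Type :=
  ((Σ i : Fin s, Fin (α i)) ⊕ (Σ i : Fin s, Fin (α' i - α i))) ⊕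
  ((Σ j : Fin t, Fin (β' j - β j)) ⊕ (Σ j : Fin t, Fin (s - β' j)))

/-- The right part `T` of the constructed graph: the sets `Bset_i` (vertex `(i, j)`
is the copy `b_{ji}` of `b_j` lying in `Bset_i`; thus `B_j = {(i, j) : i}`) together
with the compensator set `Y` of `Σ_i α'_i − Σ_j β_j` dummy vertices. -/
abbrev RightV (s t : ℕ) (α' : Fin s → ℕ) (β : Fin t → ℕ) : Type :=
  (Fin s × Fin t) ⊕ Fin (∑ i, α' i - ∑ j, β j)

variable {α α' : Fin s → ℕ} {β β' : Fin t → ℕ}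

/-- Adjacency in the constructed graph `G`: each vertex of `A_i ∪ A'_i` is joined to every
vertex of `Bset_i`; each vertex of `A'_i` is joined to every vertex of `Y`; each vertex of
`X_j` is joined to every vertex of `B_j` and to every vertex of `Y`; each vertex of `W_j`
is joined to every vertex of `B_j`. -/
def Adj : LeftV s t α α' β β' → RightV s t α' β → Prop
  | .inl (.inl ⟨i, _⟩), .inl (i', _) => i' = i       -- A_i — Bset_i
  | .inl (.inl _), .inr _ => False
  | .inl (.inr ⟨i, _⟩), .inl (i', _) => i' = i       -- A'_i — Bset_i
  | .inl (.inr _), .inr _ => True                     -- A'_i — Y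
  | .inr (.inl ⟨j, _⟩), .inl (_, j') => j' = j       -- X_j — B_j
  | .inr (.inl _), .inr _ => True                     -- X_j — Y
  | .inr (.inr ⟨j, _⟩), .inl (_, j') => j' = j       -- W_j — B_j
  | .inr (.inr _), .inr _ => False

/-- Edge weights of the constructed graph `G`. -/
def wt (δ : Fin s → Fin t → ℝ) (γ' γ'' : ℝ) : LeftV s t α α' β β' → RightV s t α' β → ℝ
  | .inl _, .inl (i, j) => δ i j     -- main edges into b_{ji}
  | .inl (.inl _), .inr _ => 0
  | .inl (.inr _), .inr _ => γ'      -- A'_i — Y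
  | .inr (.inl _), .inl _ => γ'      -- X_j — B_j
  | .inr (.inl _), .inr _ => γ''     -- X_j — Y
  | .inr (.inr _), _ => 0            -- W_j — B_j

/-- An edge is a main edge when it joins `⋃_i (A_i ∪ A'_i)` to `⋃_i Bset_i`. -/
def IsMainEdge : LeftV s t α α' β β' → RightV s t α' β → Bool
  | .inl _, .inl _ => true
  | _, _ => false

/-- A perfect matching of `G` is a bijection between the two parts all of whose
pairs are edges of `G`. -/
def IsPM (M : LeftV s t α α' β β' ≃ RightV s t α' β) : Prop :=
  ∀ v, Adj v (M v)

/-- `Weight(M)`, the total weight of a perfect matching. -/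
noncomputable def totalWeight (δ : Fin s → Fin t → ℝ) (γ' γ'' : ℝ)
    (M : LeftV s t α α' β β' ≃ RightV s t α' β) : ℝ :=
  ∑ v, wt δ γ' γ'' v (M v)

/-- `Weight(Main(M))`, the total weight of the main edges of `M`. -/
noncomputable def mainWeight (δ : Fin s → Fin t → ℝ) (γ' γ'' : ℝ)
    (M : LeftV s t α α' β β' ≃ RightV s t α' β) : ℝ :=
  ∑ v ∈ univ.filter (fun v => IsMainEdge v (M v)), wt δ γ' γ'' v (M v)

/-- `|Main(M)|`, the number of main edges of `M`. -/
def mainCount (M : LeftV s t α α' β β' ≃ RightV s t α' β) : ℕ :=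
  (univ.filter (fun v => IsMainEdge v (M v))).card

/-- `L ⊆ A × B` is an MMDC between `A` and `B`: each `a_i` lies in at least `α i` and at
most `α' i` pairs, and each `b_j` lies in at least `β j` and at most `β' j` pairs. -/
def IsMMDC (α α' : Fin s → ℕ) (β β' : Fin t → ℕ) (L : Finset (Fin s × Fin t)) : Prop :=
  (∀ i, α i ≤ (L.filter (fun p => p.1 = i)).card ∧
    (L.filter (fun p => p.1 = i)).card ≤ α' i) ∧
  (∀ j, β j ≤ (L.filter (fun p => p.2 = j)).card ∧
    (L.filter (fun p => p.2 = j)).card ≤ β' j)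

/-- `c(L)`, the cost of a matching `L` between `A` and `B`. -/
noncomputable def cost (δ : Fin s → Fin t → ℝ) (L : Finset (Fin s × Fin t)) : ℝ :=
  ∑ p ∈ L, δ p.1 p.2

end Construction

section BuildAux

variable {s t : ℕ}

/-- Sigma over first coordinate of a subtype of pairs. -/
def sigmaFstEquiv (q : Fin s × Fin t → Prop) :
    (Σ i : Fin s, {j : Fin t // q (i, j)}) ≃ {p : Fin s × Fin t // q p} where
  toFun x := ⟨(x.1, x.2.1), x.2.2⟩
  invFun p := ⟨p.1.1, ⟨p.1.2, p.2⟩⟩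
  left_inv := fun ⟨i, j, h⟩ => rfl
  right_inv := fun ⟨⟨i, j⟩, h⟩ => rfl

/-- Sigma over second coordinate of a subtype of pairs. -/
def sigmaSndEquiv (q : Fin s × Fin t → Prop) :
    (Σ j : Fin t, {i : Fin s // q (i, j)}) ≃ {p : Fin s × Fin t // q p} where
  toFun x := ⟨(x.2.1, x.1), x.2.2⟩
  invFun p := ⟨p.1.2, ⟨p.1.1, p.2⟩⟩
  left_inv := fun ⟨j, i, h⟩ => rfl
  right_inv := fun ⟨⟨i, j⟩, h⟩ => rfl

variable {α α' : Fin s → ℕ} {β β' : Fin t → ℕ}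
variable (L : Finset (Fin s × Fin t)) (l : Fin s → ℕ) (m : Fin t → ℕ)

variable (eA : ∀ i, Fin (α i) ⊕ Fin (α' i - α i) ≃ Fin (l i) ⊕ Fin (α' i - l i))
variable (fL : ∀ i, Fin (l i) ≃ {j : Fin t // (i, j) ∈ L})
variable (eX : ∀ j, Fin (β' j - β j) ≃ Fin (β' j - m j) ⊕ Fin (m j - β j))
variable (gN : ∀ j, Fin (β' j - m j) ⊕ Fin (s - β' j) ≃ {i : Fin s // (i, j) ∉ L})
variable (eY : ((Σ i : Fin s, Fin (α' i - l i)) ⊕ (Σ j : Fin t, Fin (m j - β j))) ≃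
    Fin (∑ i, α' i - ∑ j, β j))

/-- The constructed perfect matching, as a composition of equivalences. -/
def bigM : LeftV s t α α' β β' ≃ RightV s t α' β :=
  (Equiv.sumCongr
    ((Equiv.sigmaSumDistrib _ _).symm.trans
        ((Equiv.sigmaCongrRight eA).trans (Equiv.sigmaSumDistrib _ _)))
    (Equiv.sumCongr
        ((Equiv.sigmaCongrRight eX).trans (Equiv.sigmaSumDistrib _ _))
        (Equiv.refl _))).trans <|
  (Equiv.sumCongr (Equiv.refl _)
    ((Equiv.sumAssoc _ _ _).trans ((Equiv.sumCongr (Equiv.refl _) (Equiv.sumComm _ _)).trans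
      (Equiv.sumAssoc _ _ _).symm))).trans <|
  (Equiv.sumSumSumComm _ _ _ _).trans <|
  (Equiv.sumCongr
    (Equiv.sumCongr
      ((Equiv.sigmaCongrRight fL).trans (sigmaFstEquiv (· ∈ L)))
      ((Equiv.sigmaSumDistrib _ _).symm.trans
        ((Equiv.sigmaCongrRight gN).trans (sigmaSndEquiv (· ∉ L)))))
    eY).trans <|
  Equiv.sumCongr (Equiv.sumCompl (· ∈ L)) (Equiv.refl _)

theorem bigM_AA {i : Fin s} {a : Fin (α i)} {b : Fin (l i)} (h : eA i (Sum.inl a) = Sum.inl b) :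
    bigM L l m eA fL eX gN eY (Sum.inl (Sum.inl ⟨i, a⟩)) = Sum.inl (i, (fL i b).1) := by
  simp [bigM, h, sigmaFstEquiv, Equiv.sumCompl, Sigma.map, Equiv.sumAssoc, Equiv.sumComm, Equiv.sigmaSumDistrib, Equiv.sumSumSumComm, Equiv.sigmaCongrRight]

theorem bigM_A'B {i : Fin s} {a : Fin (α' i - α i)} {b : Fin (l i)}
    (h : eA i (Sum.inr a) = Sum.inl b) :
    bigM L l m eA fL eX gN eY (Sum.inl (Sum.inr ⟨i, a⟩)) = Sum.inl (i, (fL i b).1) := by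
  simp [bigM, h, sigmaFstEquiv, Equiv.sumCompl, Sigma.map, Equiv.sumAssoc, Equiv.sumComm, Equiv.sigmaSumDistrib, Equiv.sumSumSumComm, Equiv.sigmaCongrRight]

theorem bigM_A'Y {i : Fin s} {a : Fin (α' i - α i)} {c : Fin (α' i - l i)}
    (h : eA i (Sum.inr a) = Sum.inr c) :
    bigM L l m eA fL eX gN eY (Sum.inl (Sum.inr ⟨i, a⟩)) = Sum.inr (eY (Sum.inl ⟨i, c⟩)) := by
  simp [bigM, h, Sigma.map, Equiv.sumAssoc, Equiv.sumComm, Equiv.sigmaSumDistrib, Equiv.sumSumSumComm, Equiv.sigmaCongrRight]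

theorem bigM_XB {j : Fin t} {a : Fin (β' j - β j)} {b : Fin (β' j - m j)}
    (h : eX j a = Sum.inl b) :
    bigM L l m eA fL eX gN eY (Sum.inr (Sum.inl ⟨j, a⟩)) =
      Sum.inl ((gN j (Sum.inl b)).1, j) := by
  simp [bigM, h, sigmaSndEquiv, Equiv.sumCompl, Sigma.map, Equiv.sumAssoc, Equiv.sumComm, Equiv.sigmaSumDistrib, Equiv.sumSumSumComm, Equiv.sigmaCongrRight]

theorem bigM_XY {j : Fin t} {a : Fin (β' j - β j)} {c : Fin (m j - β j)}
    (h : eX j a = Sum.inr c) :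
    bigM L l m eA fL eX gN eY (Sum.inr (Sum.inl ⟨j, a⟩)) = Sum.inr (eY (Sum.inr ⟨j, c⟩)) := by
  simp [bigM, h, Sigma.map, Equiv.sumAssoc, Equiv.sumComm, Equiv.sigmaSumDistrib, Equiv.sumSumSumComm, Equiv.sigmaCongrRight]

theorem bigM_WB {j : Fin t} (a : Fin (s - β' j)) :
    bigM L l m eA fL eX gN eY (Sum.inr (Sum.inr ⟨j, a⟩)) =
      Sum.inl ((gN j (Sum.inr a)).1, j) := by
  simp [bigM, sigmaSndEquiv, Equiv.sumCompl, Sigma.map, Equiv.sumAssoc, Equiv.sumComm, Equiv.sigmaSumDistrib, Equiv.sumSumSumComm, Equiv.sigmaCongrRight]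

end BuildAux

theorem finShuffle_inl {p q r u : ℕ} (h : p + q = r + u) (hpr : p ≤ r) (a : Fin p) :
    ∃ b : Fin r,
      (finSumFinEquiv.trans ((finCongr h).trans finSumFinEquiv.symm)) (Sum.inl a) = Sum.inl b := by
  have hlt : (a : ℕ) < r := lt_of_lt_of_le a.isLt hpr
  refine ⟨⟨a, hlt⟩, ?_⟩
  simp only [Equiv.trans_apply, finSumFinEquiv_apply_left, finCongr_apply]
  have hc : Fin.cast h (Fin.castAdd q a) = Fin.castAdd u ⟨a, hlt⟩ := by ext; simp
  rw [hc, finSumFinEquiv_symm_apply_castAdd]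

/-- **Lemma 2, constructive direction.** For every MMDC `L` between `A`
and `B`, there exists a perfect matching `M'` of the constructed graph `G` with
`Weight(Main(M')) = c(L)`. -/
theorem exists_pm_of_mmdc {s t : ℕ} (α α' : Fin s → ℕ) (β β' : Fin t → ℕ)
    (δ : Fin s → Fin t → ℝ) (γ' γ'' : ℝ)
    (hs : 1 ≤ s) (ht : 1 ≤ t)
    (hδ0 : ∀ i j, 0 ≤ δ i j)
    (hα1 : ∀ i, 1 ≤ α i) (hαα : ∀ i, α i ≤ α' i) (hα't : ∀ i, α' i ≤ t)
    (hβ1 : ∀ j, 1 ≤ β j) (hββ : ∀ j, β j ≤ β' j) (hβ's : ∀ j, β' j ≤ s)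
    (hsum : ∑ j, β j ≤ ∑ i, α' i)
    (hγ' : ∀ i j, δ i j < γ') (hγ'' : γ' < γ'')
    (L : Finset (Fin s × Fin t)) (hL : IsMMDC α α' β β' L) :
    ∃ M : LeftV s t α α' β β' ≃ RightV s t α' β,
      IsPM M ∧ mainWeight δ γ' γ'' M = cost δ L := by
  classical
  set l : Fin s → ℕ := fun i => (L.filter (fun p => p.1 = i)).card with hldef
  set m : Fin t → ℕ := fun j => (L.filter (fun p => p.2 = j)).card with hmdef
  have hl : ∀ i, α i ≤ l i ∧ l i ≤ α' i := hL.1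
  have hm : ∀ j, β j ≤ m j ∧ m j ≤ β' j := hL.2
  -- cardinality facts
  have hcardL : ∀ i, Fintype.card {j : Fin t // (i, j) ∈ L} = l i := by
    intro i
    rw [Fintype.card_subtype]
    show _ = (L.filter (fun p => p.1 = i)).card
    refine Finset.card_bij' (s := Finset.univ.filter (fun j => (i, j) ∈ L))
      (t := L.filter (fun p => p.1 = i)) (fun j _ => (i, j)) (fun p _ => p.2) ?_ ?_ ?_ ?_
    · intro j hj
      simp only [Finset.mem_filter, Finset.mem_univ, true_and] at hj ⊢
      exact ⟨hj, trivial⟩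
    · intro p hp
      simp only [Finset.mem_filter, Finset.mem_univ, true_and] at hp ⊢
      obtain ⟨h1, h2⟩ := hp
      rw [show ((i, p.2) : Fin s × Fin t) = p by rw [← h2]]
      exact h1
    · intro j hj; rfl
    · intro p hp
      simp only [Finset.mem_filter] at hp
      exact Prod.ext hp.2.symm rfl
  have hcardM : ∀ j, Fintype.card {i' : Fin s // (i', j) ∈ L} = m j := by
    intro j
    rw [Fintype.card_subtype]
    show _ = (L.filter (fun p => p.2 = j)).card
    refine Finset.card_bij' (s := Finset.univ.filter (fun i' => (i', j) ∈ L))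
      (t := L.filter (fun p => p.2 = j)) (fun i' _ => (i', j)) (fun p _ => p.1) ?_ ?_ ?_ ?_
    · intro i' hi'
      simp only [Finset.mem_filter, Finset.mem_univ, true_and] at hi' ⊢
      exact ⟨hi', trivial⟩
    · intro p hp
      simp only [Finset.mem_filter, Finset.mem_univ, true_and] at hp ⊢
      obtain ⟨h1, h2⟩ := hp
      rw [show ((p.1, j) : Fin s × Fin t) = p by rw [← h2]]
      exact h1
    · intro i' hi'; rfl
    · intro p hp
      simp only [Finset.mem_filter] at hp
      exact Prod.ext rfl hp.2.symm
  have hcardN : ∀ j, Fintype.card {i' : Fin s // (i', j) ∉ L} = s - m j := by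
    intro j
    rw [Fintype.card_subtype_compl, hcardM j, Fintype.card_fin]
  have hsuml : ∑ i, l i = L.card :=
    (Finset.card_eq_sum_card_fiberwise (f := Prod.fst) (t := Finset.univ)
      (fun p _ => Finset.mem_univ p.1)).symm
  have hsumm : ∑ j, m j = L.card :=
    (Finset.card_eq_sum_card_fiberwise (f := Prod.snd) (t := Finset.univ)
      (fun p _ => Finset.mem_univ p.2)).symm
  have hY : Fintype.card
      ((Σ i : Fin s, Fin (α' i - l i)) ⊕ (Σ j : Fin t, Fin (m j - β j))) =
      ∑ i, α' i - ∑ j, β j := by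
    have e1 : ∑ i, (α' i - l i) + ∑ i, l i = ∑ i, α' i := by
      rw [← Finset.sum_add_distrib]
      exact Finset.sum_congr rfl fun i _ => Nat.sub_add_cancel (hl i).2
    have e2 : ∑ j, (m j - β j) + ∑ j, β j = ∑ j, m j := by
      rw [← Finset.sum_add_distrib]
      exact Finset.sum_congr rfl fun j _ => Nat.sub_add_cancel (hm j).1
    simp only [Fintype.card_sum, Fintype.card_sigma, Fintype.card_fin]
    omega
  -- the component equivalences
  let eA : ∀ i, Fin (α i) ⊕ Fin (α' i - α i) ≃ Fin (l i) ⊕ Fin (α' i - l i) := fun i =>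
    finSumFinEquiv.trans
      ((finCongr (by have := (hl i).1; have := (hl i).2; have := hαα i; omega :
          α i + (α' i - α i) = l i + (α' i - l i))).trans finSumFinEquiv.symm)
  have hEA : ∀ i (a : Fin (α i)), ∃ b, eA i (Sum.inl a) = Sum.inl b := fun i a =>
    finShuffle_inl _ (hl i).1 a
  let fL : ∀ i, Fin (l i) ≃ {j : Fin t // (i, j) ∈ L} := fun i =>
    (Fintype.equivFinOfCardEq (hcardL i)).symm
  let eX : ∀ j, Fin (β' j - β j) ≃ Fin (β' j - m j) ⊕ Fin (m j - β j) := fun j =>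
    (finCongr (by have := (hm j).1; have := (hm j).2; omega :
        β' j - β j = (β' j - m j) + (m j - β j))).trans finSumFinEquiv.symm
  let gN : ∀ j, Fin (β' j - m j) ⊕ Fin (s - β' j) ≃ {i' : Fin s // (i', j) ∉ L} := fun j =>
    finSumFinEquiv.trans
      ((finCongr (by have := (hm j).2; have := hβ's j; omega :
          (β' j - m j) + (s - β' j) = s - m j)).trans
        (Fintype.equivFinOfCardEq (hcardN j)).symm)
  let eY : ((Σ i : Fin s, Fin (α' i - l i)) ⊕ (Σ j : Fin t, Fin (m j - β j))) ≃
      Fin (∑ i, α' i - ∑ j, β j) := Fintype.equivFinOfCardEq hY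
  set M : LeftV s t α α' β β' ≃ RightV s t α' β := bigM L l m eA fL eX gN eY with hMdef
  -- forward classification
  have hfwd_inl : ∀ v, (∃ p, p ∈ L ∧ M (Sum.inl v) = Sum.inl p) ∨
      (∃ y, M (Sum.inl v) = Sum.inr y) := by
    rintro (⟨i, a⟩ | ⟨i, a⟩)
    · obtain ⟨b, hb⟩ := hEA i a
      exact Or.inl ⟨(i, (fL i b).1), (fL i b).2, bigM_AA L l m eA fL eX gN eY hb⟩
    · rcases heA : eA i (Sum.inr a) with b | c
      · exact Or.inl ⟨(i, (fL i b).1), (fL i b).2, bigM_A'B L l m eA fL eX gN eY heA⟩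
      · exact Or.inr ⟨_, bigM_A'Y L l m eA fL eX gN eY heA⟩
  have hfwd_inr : ∀ w, (∃ p, p ∉ L ∧ M (Sum.inr w) = Sum.inl p) ∨
      (∃ y, M (Sum.inr w) = Sum.inr y) := by
    rintro (⟨j, a⟩ | ⟨j, a⟩)
    · rcases heX : eX j a with b | c
      · exact Or.inl ⟨((gN j (Sum.inl b)).1, j), (gN j (Sum.inl b)).2,
          bigM_XB L l m eA fL eX gN eY heX⟩
      · exact Or.inr ⟨_, bigM_XY L l m eA fL eX gN eY heX⟩
    · exact Or.inl ⟨((gN j (Sum.inr a)).1, j), (gN j (Sum.inr a)).2,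
        bigM_WB L l m eA fL eX gN eY a⟩
  refine ⟨M, ?_, ?_⟩
  · -- perfect matching
    rintro ((⟨i, a⟩ | ⟨i, a⟩) | (⟨j, a⟩ | ⟨j, a⟩))
    · obtain ⟨b, hb⟩ := hEA i a
      rw [bigM_AA L l m eA fL eX gN eY hb]
      exact rfl
    · rcases heA : eA i (Sum.inr a) with b | c
      · rw [bigM_A'B L l m eA fL eX gN eY heA]
        exact rfl
      · rw [bigM_A'Y L l m eA fL eX gN eY heA]
        exact trivial
    · rcases heX : eX j a with b | c
      · rw [bigM_XB L l m eA fL eX gN eY heX]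
        exact rfl
      · rw [bigM_XY L l m eA fL eX gN eY heX]
        exact trivial
    · rw [bigM_WB L l m eA fL eX gN eY a]
      exact rfl
  · -- weight of main edges
    have hsymmL : ∀ p : Fin s × Fin t, p ∈ L → ∃ v, M.symm (Sum.inl p) = Sum.inl v := by
      intro p hp
      rcases hv : M.symm (Sum.inl p) with v | w
      · exact ⟨v, rfl⟩
      · exfalso
        have hMp : M (Sum.inr w) = Sum.inl p := by rw [← hv, Equiv.apply_symm_apply]
        rcases hfwd_inr w with ⟨q, hq, hq2⟩ | ⟨y, hy⟩
        · rw [hMp] at hq2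
          obtain rfl : p = q := by injection hq2
          exact hq hp
        · rw [hMp] at hy; exact Sum.inl_ne_inr hy
    have hsymmN : ∀ p : Fin s × Fin t, p ∉ L → ∃ w, M.symm (Sum.inl p) = Sum.inr w := by
      intro p hp
      rcases hv : M.symm (Sum.inl p) with v | w
      · exfalso
        have hMp : M (Sum.inl v) = Sum.inl p := by rw [← hv, Equiv.apply_symm_apply]
        rcases hfwd_inl v with ⟨q, hq, hq2⟩ | ⟨y, hy⟩
        · rw [hMp] at hq2
          obtain rfl : p = q := by injection hq2
          exact hp hq
        · rw [hMp] at hy; exact Sum.inl_ne_inr hy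
      · exact ⟨w, rfl⟩
    rw [mainWeight, Finset.sum_filter]
    rw [Fintype.sum_equiv M
      (fun v => if IsMainEdge v (M v) then wt δ γ' γ'' v (M v) else 0)
      (fun w => if IsMainEdge (M.symm w) w then wt δ γ' γ'' (M.symm w) w else 0)
      (fun v => by simp)]
    rw [Fintype.sum_sum_type]
    have hzero : ∀ y, (if IsMainEdge (M.symm (Sum.inr y)) (Sum.inr y) then
        wt δ γ' γ'' (M.symm (Sum.inr y)) (Sum.inr y) else 0) = 0 := by
      intro y
      rcases M.symm (Sum.inr y) with v | w <;> simp [IsMainEdge]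
    rw [Finset.sum_congr rfl fun y _ => hzero y, Finset.sum_const_zero, add_zero]
    have hterm : ∀ p : Fin s × Fin t,
        (if IsMainEdge (M.symm (Sum.inl p)) (Sum.inl p) then
          wt δ γ' γ'' (M.symm (Sum.inl p)) (Sum.inl p) else 0) =
        if p ∈ L then δ p.1 p.2 else 0 := by
      intro p
      by_cases hp : p ∈ L
      · obtain ⟨v, hv⟩ := hsymmL p hp
        rw [hv, if_pos hp]
        obtain ⟨i, j⟩ := p
        rcases v with v | v <;> simp [IsMainEdge, wt]
      · obtain ⟨w, hw⟩ := hsymmN p hp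
        rw [hw, if_neg hp]
        rcases w with w | w <;> simp [IsMainEdge]
    rw [Finset.sum_congr rfl fun p _ => hterm p, Finset.sum_ite_mem, Finset.univ_inter]
    rfl
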